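/- Let G₁ be the presented group on generators β, π, t with the following relations (writing t₁ := βtβ⁻¹ and t₂ := β⁻¹tβ): [t,t₁] = 1, [t,t₂] = 1, [t,π] = 1; t₁π = πt₂ and t₂π = πt₁; π² = t·t₁⁻¹·t₂⁻¹; β³ = 1; and β = t·(β⁻¹πβ)·π. Then there exists a surjective group homomorphism φ from G₁ onto the symmetric group on three letters such that φ(t) = 1, φ(β) is a 3-cycle and φ(π) is a transposition, and the kernel of φ is free abelian of rank 3, freely generated by the images in G₁ of t, βtβ⁻¹ and β⁻¹tβ. (G₁ is the presentation of the stabilizer B_{v₁}, the mapping class group of the 3-holed sphere, as an extension of the symmetric group S₃ by ℤ³.) -/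

import Mathlib

/-!
The presented group `G₁` on generators `β, π, t` (the mapping class group of the 3-holed
sphere) surjects onto `S₃` with `t ↦ 1`, `β` a 3-cycle, `π` a transposition, and the
kernel is free abelian of rank 3, freely generated by the images of `t`, `βtβ⁻¹`, `β⁻¹tβ`.
-/

namespace Stmt5

open scoped commutatorElement

/-- The generator `β`. -/
def b : FreeGroup (Fin 3) := FreeGroup.of 0

/-- The generator `π`. -/
def p : FreeGroup (Fin 3) := FreeGroup.of 1

/-- The generator `t`. -/
def t : FreeGroup (Fin 3) := FreeGroup.of 2

/-- `t₁ := βtβ⁻¹`. -/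
def t1 : FreeGroup (Fin 3) := b * t * b⁻¹

/-- `t₂ := β⁻¹tβ`. -/
def t2 : FreeGroup (Fin 3) := b⁻¹ * t * b

/-- Relators of `G₁`: `[t,t₁] = [t,t₂] = [t,π] = 1`; `t₁π = πt₂`; `t₂π = πt₁`;
`π² = t·t₁⁻¹·t₂⁻¹`; `β³ = 1`; `β = t·(β⁻¹πβ)·π`. -/
def rels : Set (FreeGroup (Fin 3)) :=
  {⁅t, t1⁆, ⁅t, t2⁆, ⁅t, p⁆,
   t1 * p * (p * t2)⁻¹, t2 * p * (p * t1)⁻¹,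
   p ^ 2 * (t * t1⁻¹ * t2⁻¹)⁻¹,
   b ^ 3,
   b * (t * (b⁻¹ * p * b) * p)⁻¹}

/-- `G₁`. -/
abbrev G₁ := PresentedGroup rels

/-- The image in `G₁` of a word in the free group on the generators. -/
def img : FreeGroup (Fin 3) →* G₁ := PresentedGroup.mk rels


lemma img_rel {r : FreeGroup (Fin 3)} (hr : r ∈ rels) : img r = 1 :=
  (QuotientGroup.eq_one_iff r).2 (Subgroup.subset_normalClosure hr)

def B : G₁ := img b
def P : G₁ := img p
def T : G₁ := img t
def T1 : G₁ := img t1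
def T2 : G₁ := img t2

lemma hT1 : T1 = B * T * B⁻¹ := by simp [T1, B, T, t1, map_mul]
lemma hT2 : T2 = B⁻¹ * T * B := by simp [T2, B, T, t2, map_mul]

lemma cTT1 : Commute T T1 := by
  have := img_rel (show ⁅t, t1⁆ ∈ rels by simp [rels])
  rwa [map_commutatorElement, commutatorElement_eq_one_iff_commute] at this

lemma cTT2 : Commute T T2 := by
  have := img_rel (show ⁅t, t2⁆ ∈ rels by simp [rels])
  rwa [map_commutatorElement, commutatorElement_eq_one_iff_commute] at this

lemma cTP : Commute T P := by
  have := img_rel (show ⁅t, p⁆ ∈ rels by simp [rels])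
  rwa [map_commutatorElement, commutatorElement_eq_one_iff_commute] at this

lemma hB3 : B * (B * B) = 1 := by
  have := img_rel (show b ^ 3 ∈ rels by simp [rels])
  have h : B ^ 3 = 1 := by rw [map_pow] at this; exact this
  rw [pow_succ, pow_succ, pow_one, mul_assoc] at h
  exact h

lemma hT1P : T1 * P = P * T2 := by
  have := img_rel (show t1 * p * (p * t2)⁻¹ ∈ rels by simp [rels])
  simp only [map_mul, map_inv] at this
  rw [mul_inv_eq_one] at this
  exact this

lemma hT2P : T2 * P = P * T1 := by
  have := img_rel (show t2 * p * (p * t1)⁻¹ ∈ rels by simp [rels])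
  simp only [map_mul, map_inv] at this
  rw [mul_inv_eq_one] at this
  exact this

lemma hP2 : P * P = T * (T1⁻¹ * T2⁻¹) := by
  have := img_rel (show p ^ 2 * (t * t1⁻¹ * t2⁻¹)⁻¹ ∈ rels by simp [rels])
  simp only [map_mul, map_inv, map_pow] at this
  rw [mul_inv_eq_one] at this
  show img p * img p = img t * ((img t1)⁻¹ * (img t2)⁻¹)
  rw [← pow_two, this, mul_assoc]

lemma hrel8 : B = T * (B⁻¹ * P * B) * P := by
  have := img_rel (show b * (t * (b⁻¹ * p * b) * p)⁻¹ ∈ rels by simp [rels])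
  simp only [map_mul, map_inv] at this
  rw [mul_inv_eq_one] at this
  exact this

section AuxSec
variable {G : Type*} [Group G]

lemma swX {a x y : G} (h : a * x = y * a) (X : G) : a * (x * X) = y * (a * X) := by
  rw [← mul_assoc, h, mul_assoc]

lemma conj_inv {a x y : G} (h : a * x = y * a) : a * x⁻¹ = y⁻¹ * a := by
  calc a * x⁻¹ = y⁻¹ * (y * a) * x⁻¹ := by group
  _ = y⁻¹ * (a * x) * x⁻¹ := by rw [h]
  _ = y⁻¹ * a := by group

lemma mulX {a bb c : G} (h : a * bb = c) (X : G) : a * (bb * X) = c * X := by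
  rw [← mul_assoc, h]

lemma tripX {a : G} (h : a * (a * a) = 1) (X : G) : a * (a * (a * X)) = X := by
  rw [← mul_assoc, ← mul_assoc, mul_assoc a a a, h, one_mul]

end AuxSec

lemma hBB : B * B = B⁻¹ := eq_inv_of_mul_eq_one_left (by rw [mul_assoc]; exact hB3)
lemma hBiB : B⁻¹ = B * B := hBB.symm

lemma rBT : B * T = T1 * B := by rw [hT1]; group
lemma rBT1 : B * T1 = T2 * B := by rw [hT1, hT2, hBiB]; group
lemma rBT2 : B * T2 = T * B := by rw [hT2]; group
lemma rPT : P * T = T * P := cTP.symm.eq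
lemma rPT1 : P * T1 = T2 * P := hT2P.symm
lemma rPT2 : P * T2 = T1 * P := hT1P.symm

lemma rBTi : B * T⁻¹ = T1⁻¹ * B := conj_inv rBT
lemma rBT1i : B * T1⁻¹ = T2⁻¹ * B := conj_inv rBT1
lemma rBT2i : B * T2⁻¹ = T⁻¹ * B := conj_inv rBT2
lemma rPTi : P * T⁻¹ = T⁻¹ * P := conj_inv rPT
lemma rPT1i : P * T1⁻¹ = T2⁻¹ * P := conj_inv rPT1
lemma rPT2i : P * T2⁻¹ = T1⁻¹ * P := conj_inv rPT2

lemma hPi : P⁻¹ = T2 * (T1 * (T⁻¹ * P)) := by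
  have h : (T2 * (T1 * (T⁻¹ * P))) * P = 1 := by
    have := hP2
    calc (T2 * (T1 * (T⁻¹ * P))) * P = T2 * T1 * T⁻¹ * (P * P) := by group
    _ = T2 * T1 * T⁻¹ * (T * (T1⁻¹ * T2⁻¹)) := by rw [hP2]
    _ = T2 * T1 * T1⁻¹ * T2⁻¹ := by group
    _ = 1 := by group
  exact (eq_inv_of_mul_eq_one_left h).symm

lemma step1 : P * B = B * (T⁻¹ * (B * P⁻¹)) := by
  have e1 := congrArg (fun g : G₁ => B * (T⁻¹ * (g * P⁻¹))) hrel8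
  simp only [mul_assoc, inv_mul_cancel_left, mul_inv_cancel_left, mul_inv_cancel,
    mul_one] at e1
  exact e1.symm

lemma hPB : P * B = T * (T2⁻¹ * (B * (B * P))) := by
  rw [step1, hPi]
  simp only [mul_assoc, swX rBT, swX rBT1, swX rBT2, swX rBTi, swX rBT1i, swX rBT2i,
    rBT, rBT1, rBT2, rBTi, rBT1i, rBT2i, inv_mul_cancel_left, mul_inv_cancel_left,
    one_mul, mul_one, inv_mul_cancel, mul_inv_cancel, hB3, tripX hB3]

lemma cT1T2 : Commute T1 T2 := by
  have h := cTT1.map (MulAut.conj B).toMonoidHom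
  simp only [MulEquiv.coe_toMonoidHom, MulAut.conj_apply] at h
  have e1 : B * T * B⁻¹ = T1 := hT1.symm
  have e2 : B * T1 * B⁻¹ = T2 := by rw [rBT1]; group
  rwa [e1, e2] at h

-- sorted-multiplication simp rules
lemma s10 : ∀ (m n : ℤ), T1 ^ m * T ^ n = T ^ n * T1 ^ m :=
  fun m n => ((cTT1.symm).zpow_zpow m n).eq
lemma s20 : ∀ (m n : ℤ), T2 ^ m * T ^ n = T ^ n * T2 ^ m :=
  fun m n => ((cTT2.symm).zpow_zpow m n).eq
lemma s21 : ∀ (m n : ℤ), T2 ^ m * T1 ^ n = T1 ^ n * T2 ^ m :=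
  fun m n => ((cT1T2.symm).zpow_zpow m n).eq
lemma s10X : ∀ (m n : ℤ) (X : G₁), T1 ^ m * (T ^ n * X) = T ^ n * (T1 ^ m * X) :=
  fun m n => swX (s10 m n)
lemma s20X : ∀ (m n : ℤ) (X : G₁), T2 ^ m * (T ^ n * X) = T ^ n * (T2 ^ m * X) :=
  fun m n => swX (s20 m n)
lemma s21X : ∀ (m n : ℤ) (X : G₁), T2 ^ m * (T1 ^ n * X) = T1 ^ n * (T2 ^ m * X) :=
  fun m n => swX (s21 m n)
lemma cmbT : ∀ (m n : ℤ) (X : G₁), T ^ m * (T ^ n * X) = T ^ (m + n) * X :=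
  fun m n => mulX (zpow_add T m n).symm
lemma cmbT1 : ∀ (m n : ℤ) (X : G₁), T1 ^ m * (T1 ^ n * X) = T1 ^ (m + n) * X :=
  fun m n => mulX (zpow_add T1 m n).symm
lemma cmbT2 : ∀ (m n : ℤ), T2 ^ m * T2 ^ n = T2 ^ (m + n) :=
  fun m n => (zpow_add T2 m n).symm

def ψ : Multiplicative (Fin 3 → ℤ) →* G₁ :=
  MonoidHom.mk' (fun u => T ^ (Multiplicative.toAdd u 0) *
      (T1 ^ (Multiplicative.toAdd u 1) * T2 ^ (Multiplicative.toAdd u 2)))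
    (by
      intro u v
      simp only [toAdd_mul, Pi.add_apply]
      simp only [mul_assoc, s10X, s20X, s21X, s10, s20, s21, cmbT, cmbT1, cmbT2])

lemma ψ_apply (u : Multiplicative (Fin 3 → ℤ)) :
    ψ u = T ^ (Multiplicative.toAdd u 0) *
      (T1 ^ (Multiplicative.toAdd u 1) * T2 ^ (Multiplicative.toAdd u 2)) := rfl

lemma ψ_single0 : ψ (Multiplicative.ofAdd (Pi.single 0 1)) = T := by
  rw [ψ_apply]
  simp [Pi.single_apply]

lemma ψ_single1 : ψ (Multiplicative.ofAdd (Pi.single 1 1)) = T1 := by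
  rw [ψ_apply]
  simp [Pi.single_apply]

lemma ψ_single2 : ψ (Multiplicative.ofAdd (Pi.single 2 1)) = T2 := by
  rw [ψ_apply]
  simp [Pi.single_apply]

def cσ : Equiv.Perm (Fin 3) := Equiv.swap 0 2 * Equiv.swap 0 1
def sσ : Equiv.Perm (Fin 3) := Equiv.swap 1 2

def aff (σ : Equiv.Perm (Fin 3)) (v : Fin 3 → ℚ) : Equiv.Perm (Fin 3 → ℚ) where
  toFun x := fun i => x (σ⁻¹ i) + v i
  invFun y := fun i => y (σ i) - v (σ i)
  left_inv x := by funext i; simp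
  right_inv y := by funext i; simp

@[simp] lemma aff_apply (σ : Equiv.Perm (Fin 3)) (v : Fin 3 → ℚ) (x : Fin 3 → ℚ) (i : Fin 3) :
    aff σ v x i = x (σ⁻¹ i) + v i := rfl

@[simp] lemma aff_mul (σ τ : Equiv.Perm (Fin 3)) (v w : Fin 3 → ℚ) :
    aff σ v * aff τ w = aff (σ * τ) (fun i => w (σ⁻¹ i) + v i) := by
  ext x i
  simp [aff, Equiv.Perm.mul_apply, add_assoc]

@[simp] lemma aff_inv (σ : Equiv.Perm (Fin 3)) (v : Fin 3 → ℚ) :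
    (aff σ v)⁻¹ = aff σ⁻¹ (fun i => -v (σ i)) := by
  rw [inv_eq_iff_mul_eq_one, aff_mul]
  ext x i
  simp [aff]

lemma aff_eq_one (σ : Equiv.Perm (Fin 3)) (v : Fin 3 → ℚ)
    (h : ∀ (x : Fin 3 → ℚ) (i : Fin 3), x (σ⁻¹ i) + v i = x i) : aff σ v = 1 :=
  Equiv.ext fun x => funext fun i => h x i

def fθ : Fin 3 → Equiv.Perm (Fin 3 → ℚ) :=
  ![aff cσ 0, aff sσ ![1/2, -1/2, -1/2], aff 1 ![1, 0, 0]]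

lemma fθ_rels : ∀ r ∈ rels, FreeGroup.lift fθ r = 1 := by
  intro r hr
  simp only [rels, Set.mem_insert_iff, Set.mem_singleton_iff] at hr
  rcases hr with h|h|h|h|h|h|h|h <;> subst h <;>
  · simp only [b, p, t, t1, t2, commutatorElement_def, map_mul, map_inv, map_pow,
      FreeGroup.lift_apply_of, fθ, Matrix.cons_val_zero, Matrix.cons_val_one, Matrix.head_cons,
      Matrix.cons_val_two, Matrix.tail_cons, pow_succ, pow_zero, one_mul,
      aff_mul, aff_inv]
    refine aff_eq_one _ _ ?_
    intro x i
    fin_cases i <;>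
      simp [cσ, sσ, Equiv.swap_apply_def] <;> ring

def θ : G₁ →* Equiv.Perm (Fin 3 → ℚ) := PresentedGroup.toGroup fθ_rels


lemma θB : θ B = aff cσ 0 := by
  calc θ B = fθ 0 := PresentedGroup.toGroup.of fθ_rels
  _ = aff cσ 0 := by simp [fθ]

lemma θP : θ P = aff sσ ![1/2, -1/2, -1/2] := by
  calc θ P = fθ 1 := PresentedGroup.toGroup.of fθ_rels
  _ = aff sσ ![1/2, -1/2, -1/2] := by simp [fθ]

lemma θT : θ T = aff 1 ![1, 0, 0] := by
  calc θ T = fθ 2 := PresentedGroup.toGroup.of fθ_rels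
  _ = aff 1 ![1, 0, 0] := by simp [fθ]

lemma θT1 : θ T1 = aff 1 ![0, 1, 0] := by
  have : T1 = B * T * B⁻¹ := hT1
  rw [this, map_mul, map_mul, map_inv, θB, θT, aff_inv, aff_mul, aff_mul]
  ext x i
  fin_cases i <;> simp [cσ, Equiv.swap_apply_def] <;> norm_num

lemma θT2 : θ T2 = aff 1 ![0, 0, 1] := by
  have : T2 = B⁻¹ * T * B := hT2
  rw [this, map_mul, map_mul, map_inv, θB, θT, aff_inv, aff_mul, aff_mul]
  ext x i
  fin_cases i <;> simp [cσ, Equiv.swap_apply_def] <;> norm_num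

def trH : Multiplicative (Fin 3 → ℚ) →* Equiv.Perm (Fin 3 → ℚ) :=
  MonoidHom.mk' (fun v => aff 1 (Multiplicative.toAdd v))
    (by
      intro u v
      ext x i
      simp [aff_apply, Equiv.Perm.mul_apply, toAdd_mul]
      ring)

lemma aff_zpow (v : Fin 3 → ℚ) (n : ℤ) : (aff 1 v) ^ n = aff 1 (n • v) := by
  have h : aff 1 v = trH (Multiplicative.ofAdd v) := rfl
  rw [h, ← map_zpow, ← ofAdd_zsmul]
  rfl

lemma θψ (u : Multiplicative (Fin 3 → ℤ)) :
    θ (ψ u) = aff 1 (fun i => ((Multiplicative.toAdd u i : ℤ) : ℚ)) := by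
  rw [ψ_apply, map_mul, map_mul, map_zpow, map_zpow, map_zpow, θT, θT1, θT2,
    aff_zpow, aff_zpow, aff_zpow, aff_mul, aff_mul]
  have h1 : ((1 : Equiv.Perm (Fin 3)) * (1 * 1)) = 1 := by simp
  ext x i
  fin_cases i <;>
    simp [Matrix.cons_val_zero, Matrix.cons_val_one, Matrix.head_cons, smul_eq_mul] <;>
    norm_num

lemma ψ_inj : Function.Injective ψ := by
  intro u v h
  have h2 := congrArg θ h
  rw [θψ, θψ] at h2
  have h3 : ∀ i, ((Multiplicative.toAdd u i : ℤ) : ℚ) = ((Multiplicative.toAdd v i : ℤ) : ℚ) := by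
    intro i
    have h4 := congrArg (fun e : Equiv.Perm (Fin 3 → ℚ) => e 0 i) h2
    simpa using h4
  have h5 : Multiplicative.toAdd u = Multiplicative.toAdd v :=
    funext fun i => by exact_mod_cast h3 i
  exact Multiplicative.toAdd.injective h5

-- φ directly
def fφ : Fin 3 → Equiv.Perm (Fin 3) := ![cσ, sσ, 1]

lemma fφ_rels : ∀ r ∈ rels, FreeGroup.lift fφ r = 1 := by
  intro r hr
  simp only [rels, Set.mem_insert_iff, Set.mem_singleton_iff] at hr
  rcases hr with h|h|h|h|h|h|h|h <;> subst h <;>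
    simp only [b, p, t, t1, t2, commutatorElement_def, map_mul, map_inv, map_pow,
      FreeGroup.lift_apply_of] <;> decide

def φ : G₁ →* Equiv.Perm (Fin 3) := PresentedGroup.toGroup fφ_rels


lemma φB : φ B = cσ := by
  calc φ B = fφ 0 := PresentedGroup.toGroup.of fφ_rels
  _ = cσ := by simp [fφ]

lemma φP : φ P = sσ := by
  calc φ P = fφ 1 := PresentedGroup.toGroup.of fφ_rels
  _ = sσ := by simp [fφ]

lemma φT : φ T = 1 := by
  calc φ T = fφ 2 := PresentedGroup.toGroup.of fφ_rels
  _ = 1 := by simp [fφ]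

lemma φT1 : φ T1 = 1 := by
  rw [hT1, map_mul, map_mul, map_inv, φB, φT]; group

lemma φT2 : φ T2 = 1 := by
  rw [hT2, map_mul, map_mul, map_inv, φB, φT]; group

def rp : Fin 6 → G₁ := ![1, B, B * B, P, B * P, B * (B * P)]

abbrev Kk : Subgroup G₁ := ψ.range

lemma hTK : T ∈ Kk := ⟨Multiplicative.ofAdd (Pi.single 0 1), ψ_single0⟩
lemma hT1K : T1 ∈ Kk := ⟨Multiplicative.ofAdd (Pi.single 1 1), ψ_single1⟩
lemma hT2K : T2 ∈ Kk := ⟨Multiplicative.ofAdd (Pi.single 2 1), ψ_single2⟩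

def Q (g : G₁) : Prop := ∀ i : Fin 6, ∃ k ∈ Kk, ∃ m : Fin 6, rp i * g = k * rp m

lemma QB : Q (B) := by
  intro i
  fin_cases i
  · refine ⟨1, one_mem _, 1, ?_⟩
    show 1 * B = 1 * B
    try simp only [mul_assoc, one_mul, mul_one, inv_mul_cancel_left, mul_inv_cancel_left, inv_mul_cancel,
      mul_inv_cancel, rBT, rBT1, rBT2, rBTi, rBT1i, rBT2i, swX rBT, swX rBT1, swX rBT2,
      swX rBTi, swX rBT1i, swX rBT2i, rPT, rPT1, rPT2, rPTi, rPT1i, rPT2i, swX rPT,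
      swX rPT1, swX rPT2, swX rPTi, swX rPT1i, swX rPT2i, hPB, mulX hPB, hP2, mulX hP2,
      hB3, tripX hB3]
  · refine ⟨1, one_mem _, 2, ?_⟩
    show B * B = 1 * (B * B)
    try simp only [mul_assoc, one_mul, mul_one, inv_mul_cancel_left, mul_inv_cancel_left, inv_mul_cancel,
      mul_inv_cancel, rBT, rBT1, rBT2, rBTi, rBT1i, rBT2i, swX rBT, swX rBT1, swX rBT2,
      swX rBTi, swX rBT1i, swX rBT2i, rPT, rPT1, rPT2, rPTi, rPT1i, rPT2i, swX rPT,
      swX rPT1, swX rPT2, swX rPTi, swX rPT1i, swX rPT2i, hPB, mulX hPB, hP2, mulX hP2,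
      hB3, tripX hB3]
  · refine ⟨1, one_mem _, 0, ?_⟩
    show (B * B) * B = 1 * (1:G₁)
    try simp only [mul_assoc, one_mul, mul_one, inv_mul_cancel_left, mul_inv_cancel_left, inv_mul_cancel,
      mul_inv_cancel, rBT, rBT1, rBT2, rBTi, rBT1i, rBT2i, swX rBT, swX rBT1, swX rBT2,
      swX rBTi, swX rBT1i, swX rBT2i, rPT, rPT1, rPT2, rPTi, rPT1i, rPT2i, swX rPT,
      swX rPT1, swX rPT2, swX rPTi, swX rPT1i, swX rPT2i, hPB, mulX hPB, hP2, mulX hP2,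
      hB3, tripX hB3]
  · refine ⟨T * T2⁻¹, mul_mem hTK (inv_mem hT2K), 5, ?_⟩
    show P * B = T * T2⁻¹ * (B * (B * P))
    try simp only [mul_assoc, one_mul, mul_one, inv_mul_cancel_left, mul_inv_cancel_left, inv_mul_cancel,
      mul_inv_cancel, rBT, rBT1, rBT2, rBTi, rBT1i, rBT2i, swX rBT, swX rBT1, swX rBT2,
      swX rBTi, swX rBT1i, swX rBT2i, rPT, rPT1, rPT2, rPTi, rPT1i, rPT2i, swX rPT,
      swX rPT1, swX rPT2, swX rPTi, swX rPT1i, swX rPT2i, hPB, mulX hPB, hP2, mulX hP2,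
      hB3, tripX hB3]
  · refine ⟨T1 * T⁻¹, mul_mem hT1K (inv_mem hTK), 3, ?_⟩
    show (B * P) * B = T1 * T⁻¹ * P
    try simp only [mul_assoc, one_mul, mul_one, inv_mul_cancel_left, mul_inv_cancel_left, inv_mul_cancel,
      mul_inv_cancel, rBT, rBT1, rBT2, rBTi, rBT1i, rBT2i, swX rBT, swX rBT1, swX rBT2,
      swX rBTi, swX rBT1i, swX rBT2i, rPT, rPT1, rPT2, rPTi, rPT1i, rPT2i, swX rPT,
      swX rPT1, swX rPT2, swX rPTi, swX rPT1i, swX rPT2i, hPB, mulX hPB, hP2, mulX hP2,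
      hB3, tripX hB3]
  · refine ⟨T2 * T1⁻¹, mul_mem hT2K (inv_mem hT1K), 4, ?_⟩
    show (B * (B * P)) * B = T2 * T1⁻¹ * (B * P)
    try simp only [mul_assoc, one_mul, mul_one, inv_mul_cancel_left, mul_inv_cancel_left, inv_mul_cancel,
      mul_inv_cancel, rBT, rBT1, rBT2, rBTi, rBT1i, rBT2i, swX rBT, swX rBT1, swX rBT2,
      swX rBTi, swX rBT1i, swX rBT2i, rPT, rPT1, rPT2, rPTi, rPT1i, rPT2i, swX rPT,
      swX rPT1, swX rPT2, swX rPTi, swX rPT1i, swX rPT2i, hPB, mulX hPB, hP2, mulX hP2,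
      hB3, tripX hB3]

lemma QBi : Q (B⁻¹) := by
  intro i
  fin_cases i
  · refine ⟨1, one_mem _, 2, ?_⟩
    show 1 * B⁻¹ = 1 * (B * B)
    rw [hBiB]
    try simp only [mul_assoc, one_mul, mul_one, inv_mul_cancel_left, mul_inv_cancel_left, inv_mul_cancel,
      mul_inv_cancel, rBT, rBT1, rBT2, rBTi, rBT1i, rBT2i, swX rBT, swX rBT1, swX rBT2,
      swX rBTi, swX rBT1i, swX rBT2i, rPT, rPT1, rPT2, rPTi, rPT1i, rPT2i, swX rPT,
      swX rPT1, swX rPT2, swX rPTi, swX rPT1i, swX rPT2i, hPB, mulX hPB, hP2, mulX hP2,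
      hB3, tripX hB3]
  · refine ⟨1, one_mem _, 0, ?_⟩
    show B * B⁻¹ = 1 * (1:G₁)
    rw [hBiB]
    try simp only [mul_assoc, one_mul, mul_one, inv_mul_cancel_left, mul_inv_cancel_left, inv_mul_cancel,
      mul_inv_cancel, rBT, rBT1, rBT2, rBTi, rBT1i, rBT2i, swX rBT, swX rBT1, swX rBT2,
      swX rBTi, swX rBT1i, swX rBT2i, rPT, rPT1, rPT2, rPTi, rPT1i, rPT2i, swX rPT,
      swX rPT1, swX rPT2, swX rPTi, swX rPT1i, swX rPT2i, hPB, mulX hPB, hP2, mulX hP2,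
      hB3, tripX hB3]
  · refine ⟨1, one_mem _, 1, ?_⟩
    show (B * B) * B⁻¹ = 1 * B
    rw [hBiB]
    try simp only [mul_assoc, one_mul, mul_one, inv_mul_cancel_left, mul_inv_cancel_left, inv_mul_cancel,
      mul_inv_cancel, rBT, rBT1, rBT2, rBTi, rBT1i, rBT2i, swX rBT, swX rBT1, swX rBT2,
      swX rBTi, swX rBT1i, swX rBT2i, rPT, rPT1, rPT2, rPTi, rPT1i, rPT2i, swX rPT,
      swX rPT1, swX rPT2, swX rPTi, swX rPT1i, swX rPT2i, hPB, mulX hPB, hP2, mulX hP2,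
      hB3, tripX hB3]
  · refine ⟨T * T1⁻¹, mul_mem hTK (inv_mem hT1K), 4, ?_⟩
    show P * B⁻¹ = T * T1⁻¹ * (B * P)
    rw [hBiB]
    try simp only [mul_assoc, one_mul, mul_one, inv_mul_cancel_left, mul_inv_cancel_left, inv_mul_cancel,
      mul_inv_cancel, rBT, rBT1, rBT2, rBTi, rBT1i, rBT2i, swX rBT, swX rBT1, swX rBT2,
      swX rBTi, swX rBT1i, swX rBT2i, rPT, rPT1, rPT2, rPTi, rPT1i, rPT2i, swX rPT,
      swX rPT1, swX rPT2, swX rPTi, swX rPT1i, swX rPT2i, hPB, mulX hPB, hP2, mulX hP2,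
      hB3, tripX hB3]
  · refine ⟨T1 * T2⁻¹, mul_mem hT1K (inv_mem hT2K), 5, ?_⟩
    show (B * P) * B⁻¹ = T1 * T2⁻¹ * (B * (B * P))
    rw [hBiB]
    try simp only [mul_assoc, one_mul, mul_one, inv_mul_cancel_left, mul_inv_cancel_left, inv_mul_cancel,
      mul_inv_cancel, rBT, rBT1, rBT2, rBTi, rBT1i, rBT2i, swX rBT, swX rBT1, swX rBT2,
      swX rBTi, swX rBT1i, swX rBT2i, rPT, rPT1, rPT2, rPTi, rPT1i, rPT2i, swX rPT,
      swX rPT1, swX rPT2, swX rPTi, swX rPT1i, swX rPT2i, hPB, mulX hPB, hP2, mulX hP2,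
      hB3, tripX hB3]
  · refine ⟨T2 * T⁻¹, mul_mem hT2K (inv_mem hTK), 3, ?_⟩
    show (B * (B * P)) * B⁻¹ = T2 * T⁻¹ * P
    rw [hBiB]
    try simp only [mul_assoc, one_mul, mul_one, inv_mul_cancel_left, mul_inv_cancel_left, inv_mul_cancel,
      mul_inv_cancel, rBT, rBT1, rBT2, rBTi, rBT1i, rBT2i, swX rBT, swX rBT1, swX rBT2,
      swX rBTi, swX rBT1i, swX rBT2i, rPT, rPT1, rPT2, rPTi, rPT1i, rPT2i, swX rPT,
      swX rPT1, swX rPT2, swX rPTi, swX rPT1i, swX rPT2i, hPB, mulX hPB, hP2, mulX hP2,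
      hB3, tripX hB3]

lemma QP : Q (P) := by
  intro i
  fin_cases i
  · refine ⟨1, one_mem _, 3, ?_⟩
    show 1 * P = 1 * P
    try simp only [mul_assoc, one_mul, mul_one, inv_mul_cancel_left, mul_inv_cancel_left, inv_mul_cancel,
      mul_inv_cancel, rBT, rBT1, rBT2, rBTi, rBT1i, rBT2i, swX rBT, swX rBT1, swX rBT2,
      swX rBTi, swX rBT1i, swX rBT2i, rPT, rPT1, rPT2, rPTi, rPT1i, rPT2i, swX rPT,
      swX rPT1, swX rPT2, swX rPTi, swX rPT1i, swX rPT2i, hPB, mulX hPB, hP2, mulX hP2,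
      hB3, tripX hB3]
  · refine ⟨1, one_mem _, 4, ?_⟩
    show B * P = 1 * (B * P)
    try simp only [mul_assoc, one_mul, mul_one, inv_mul_cancel_left, mul_inv_cancel_left, inv_mul_cancel,
      mul_inv_cancel, rBT, rBT1, rBT2, rBTi, rBT1i, rBT2i, swX rBT, swX rBT1, swX rBT2,
      swX rBTi, swX rBT1i, swX rBT2i, rPT, rPT1, rPT2, rPTi, rPT1i, rPT2i, swX rPT,
      swX rPT1, swX rPT2, swX rPTi, swX rPT1i, swX rPT2i, hPB, mulX hPB, hP2, mulX hP2,
      hB3, tripX hB3]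
  · refine ⟨1, one_mem _, 5, ?_⟩
    show (B * B) * P = 1 * (B * (B * P))
    try simp only [mul_assoc, one_mul, mul_one, inv_mul_cancel_left, mul_inv_cancel_left, inv_mul_cancel,
      mul_inv_cancel, rBT, rBT1, rBT2, rBTi, rBT1i, rBT2i, swX rBT, swX rBT1, swX rBT2,
      swX rBTi, swX rBT1i, swX rBT2i, rPT, rPT1, rPT2, rPTi, rPT1i, rPT2i, swX rPT,
      swX rPT1, swX rPT2, swX rPTi, swX rPT1i, swX rPT2i, hPB, mulX hPB, hP2, mulX hP2,
      hB3, tripX hB3]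
  · refine ⟨T * (T1⁻¹ * T2⁻¹), mul_mem hTK (mul_mem (inv_mem hT1K) (inv_mem hT2K)), 0, ?_⟩
    show P * P = T * (T1⁻¹ * T2⁻¹) * (1:G₁)
    try simp only [mul_assoc, one_mul, mul_one, inv_mul_cancel_left, mul_inv_cancel_left, inv_mul_cancel,
      mul_inv_cancel, rBT, rBT1, rBT2, rBTi, rBT1i, rBT2i, swX rBT, swX rBT1, swX rBT2,
      swX rBTi, swX rBT1i, swX rBT2i, rPT, rPT1, rPT2, rPTi, rPT1i, rPT2i, swX rPT,
      swX rPT1, swX rPT2, swX rPTi, swX rPT1i, swX rPT2i, hPB, mulX hPB, hP2, mulX hP2,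
      hB3, tripX hB3]
  · refine ⟨T1 * (T2⁻¹ * T⁻¹), mul_mem hT1K (mul_mem (inv_mem hT2K) (inv_mem hTK)), 1, ?_⟩
    show (B * P) * P = T1 * (T2⁻¹ * T⁻¹) * B
    try simp only [mul_assoc, one_mul, mul_one, inv_mul_cancel_left, mul_inv_cancel_left, inv_mul_cancel,
      mul_inv_cancel, rBT, rBT1, rBT2, rBTi, rBT1i, rBT2i, swX rBT, swX rBT1, swX rBT2,
      swX rBTi, swX rBT1i, swX rBT2i, rPT, rPT1, rPT2, rPTi, rPT1i, rPT2i, swX rPT,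
      swX rPT1, swX rPT2, swX rPTi, swX rPT1i, swX rPT2i, hPB, mulX hPB, hP2, mulX hP2,
      hB3, tripX hB3]
  · refine ⟨T2 * (T⁻¹ * T1⁻¹), mul_mem hT2K (mul_mem (inv_mem hTK) (inv_mem hT1K)), 2, ?_⟩
    show (B * (B * P)) * P = T2 * (T⁻¹ * T1⁻¹) * (B * B)
    try simp only [mul_assoc, one_mul, mul_one, inv_mul_cancel_left, mul_inv_cancel_left, inv_mul_cancel,
      mul_inv_cancel, rBT, rBT1, rBT2, rBTi, rBT1i, rBT2i, swX rBT, swX rBT1, swX rBT2,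
      swX rBTi, swX rBT1i, swX rBT2i, rPT, rPT1, rPT2, rPTi, rPT1i, rPT2i, swX rPT,
      swX rPT1, swX rPT2, swX rPTi, swX rPT1i, swX rPT2i, hPB, mulX hPB, hP2, mulX hP2,
      hB3, tripX hB3]

lemma QPi : Q (P⁻¹) := by
  intro i
  fin_cases i
  · refine ⟨T2 * (T1 * T⁻¹), mul_mem hT2K (mul_mem hT1K (inv_mem hTK)), 3, ?_⟩
    show 1 * P⁻¹ = T2 * (T1 * T⁻¹) * P
    rw [hPi]
    try simp only [mul_assoc, one_mul, mul_one, inv_mul_cancel_left, mul_inv_cancel_left, inv_mul_cancel,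
      mul_inv_cancel, rBT, rBT1, rBT2, rBTi, rBT1i, rBT2i, swX rBT, swX rBT1, swX rBT2,
      swX rBTi, swX rBT1i, swX rBT2i, rPT, rPT1, rPT2, rPTi, rPT1i, rPT2i, swX rPT,
      swX rPT1, swX rPT2, swX rPTi, swX rPT1i, swX rPT2i, hPB, mulX hPB, hP2, mulX hP2,
      hB3, tripX hB3]
  · refine ⟨T * (T2 * T1⁻¹), mul_mem hTK (mul_mem hT2K (inv_mem hT1K)), 4, ?_⟩
    show B * P⁻¹ = T * (T2 * T1⁻¹) * (B * P)
    rw [hPi]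
    try simp only [mul_assoc, one_mul, mul_one, inv_mul_cancel_left, mul_inv_cancel_left, inv_mul_cancel,
      mul_inv_cancel, rBT, rBT1, rBT2, rBTi, rBT1i, rBT2i, swX rBT, swX rBT1, swX rBT2,
      swX rBTi, swX rBT1i, swX rBT2i, rPT, rPT1, rPT2, rPTi, rPT1i, rPT2i, swX rPT,
      swX rPT1, swX rPT2, swX rPTi, swX rPT1i, swX rPT2i, hPB, mulX hPB, hP2, mulX hP2,
      hB3, tripX hB3]
  · refine ⟨T1 * (T * T2⁻¹), mul_mem hT1K (mul_mem hTK (inv_mem hT2K)), 5, ?_⟩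
    show (B * B) * P⁻¹ = T1 * (T * T2⁻¹) * (B * (B * P))
    rw [hPi]
    try simp only [mul_assoc, one_mul, mul_one, inv_mul_cancel_left, mul_inv_cancel_left, inv_mul_cancel,
      mul_inv_cancel, rBT, rBT1, rBT2, rBTi, rBT1i, rBT2i, swX rBT, swX rBT1, swX rBT2,
      swX rBTi, swX rBT1i, swX rBT2i, rPT, rPT1, rPT2, rPTi, rPT1i, rPT2i, swX rPT,
      swX rPT1, swX rPT2, swX rPTi, swX rPT1i, swX rPT2i, hPB, mulX hPB, hP2, mulX hP2,
      hB3, tripX hB3]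
  · refine ⟨1, one_mem _, 0, ?_⟩
    show P * P⁻¹ = 1 * (1:G₁)
    try simp only [mul_assoc, one_mul, mul_one, inv_mul_cancel_left, mul_inv_cancel_left, inv_mul_cancel,
      mul_inv_cancel, rBT, rBT1, rBT2, rBTi, rBT1i, rBT2i, swX rBT, swX rBT1, swX rBT2,
      swX rBTi, swX rBT1i, swX rBT2i, rPT, rPT1, rPT2, rPTi, rPT1i, rPT2i, swX rPT,
      swX rPT1, swX rPT2, swX rPTi, swX rPT1i, swX rPT2i, hPB, mulX hPB, hP2, mulX hP2,
      hB3, tripX hB3]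
  · refine ⟨T2 * (T * (T2⁻¹ * T⁻¹)), mul_mem hT2K (mul_mem hTK (mul_mem (inv_mem hT2K) (inv_mem hTK))), 1, ?_⟩
    show (B * P) * P⁻¹ = T2 * (T * (T2⁻¹ * T⁻¹)) * B
    rw [hPi]
    try simp only [mul_assoc, one_mul, mul_one, inv_mul_cancel_left, mul_inv_cancel_left, inv_mul_cancel,
      mul_inv_cancel, rBT, rBT1, rBT2, rBTi, rBT1i, rBT2i, swX rBT, swX rBT1, swX rBT2,
      swX rBTi, swX rBT1i, swX rBT2i, rPT, rPT1, rPT2, rPTi, rPT1i, rPT2i, swX rPT,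
      swX rPT1, swX rPT2, swX rPTi, swX rPT1i, swX rPT2i, hPB, mulX hPB, hP2, mulX hP2,
      hB3, tripX hB3]
  · refine ⟨T * (T1 * (T⁻¹ * T1⁻¹)), mul_mem hTK (mul_mem hT1K (mul_mem (inv_mem hTK) (inv_mem hT1K))), 2, ?_⟩
    show (B * (B * P)) * P⁻¹ = T * (T1 * (T⁻¹ * T1⁻¹)) * (B * B)
    rw [hPi]
    try simp only [mul_assoc, one_mul, mul_one, inv_mul_cancel_left, mul_inv_cancel_left, inv_mul_cancel,
      mul_inv_cancel, rBT, rBT1, rBT2, rBTi, rBT1i, rBT2i, swX rBT, swX rBT1, swX rBT2,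
      swX rBTi, swX rBT1i, swX rBT2i, rPT, rPT1, rPT2, rPTi, rPT1i, rPT2i, swX rPT,
      swX rPT1, swX rPT2, swX rPTi, swX rPT1i, swX rPT2i, hPB, mulX hPB, hP2, mulX hP2,
      hB3, tripX hB3]

lemma QT : Q (T) := by
  intro i
  fin_cases i
  · refine ⟨T, hTK, 0, ?_⟩
    show 1 * T = T * (1:G₁)
    try simp only [mul_assoc, one_mul, mul_one, inv_mul_cancel_left, mul_inv_cancel_left, inv_mul_cancel,
      mul_inv_cancel, rBT, rBT1, rBT2, rBTi, rBT1i, rBT2i, swX rBT, swX rBT1, swX rBT2,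
      swX rBTi, swX rBT1i, swX rBT2i, rPT, rPT1, rPT2, rPTi, rPT1i, rPT2i, swX rPT,
      swX rPT1, swX rPT2, swX rPTi, swX rPT1i, swX rPT2i, hPB, mulX hPB, hP2, mulX hP2,
      hB3, tripX hB3]
  · refine ⟨T1, hT1K, 1, ?_⟩
    show B * T = T1 * B
    try simp only [mul_assoc, one_mul, mul_one, inv_mul_cancel_left, mul_inv_cancel_left, inv_mul_cancel,
      mul_inv_cancel, rBT, rBT1, rBT2, rBTi, rBT1i, rBT2i, swX rBT, swX rBT1, swX rBT2,
      swX rBTi, swX rBT1i, swX rBT2i, rPT, rPT1, rPT2, rPTi, rPT1i, rPT2i, swX rPT,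
      swX rPT1, swX rPT2, swX rPTi, swX rPT1i, swX rPT2i, hPB, mulX hPB, hP2, mulX hP2,
      hB3, tripX hB3]
  · refine ⟨T2, hT2K, 2, ?_⟩
    show (B * B) * T = T2 * (B * B)
    try simp only [mul_assoc, one_mul, mul_one, inv_mul_cancel_left, mul_inv_cancel_left, inv_mul_cancel,
      mul_inv_cancel, rBT, rBT1, rBT2, rBTi, rBT1i, rBT2i, swX rBT, swX rBT1, swX rBT2,
      swX rBTi, swX rBT1i, swX rBT2i, rPT, rPT1, rPT2, rPTi, rPT1i, rPT2i, swX rPT,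
      swX rPT1, swX rPT2, swX rPTi, swX rPT1i, swX rPT2i, hPB, mulX hPB, hP2, mulX hP2,
      hB3, tripX hB3]
  · refine ⟨T, hTK, 3, ?_⟩
    show P * T = T * P
    try simp only [mul_assoc, one_mul, mul_one, inv_mul_cancel_left, mul_inv_cancel_left, inv_mul_cancel,
      mul_inv_cancel, rBT, rBT1, rBT2, rBTi, rBT1i, rBT2i, swX rBT, swX rBT1, swX rBT2,
      swX rBTi, swX rBT1i, swX rBT2i, rPT, rPT1, rPT2, rPTi, rPT1i, rPT2i, swX rPT,
      swX rPT1, swX rPT2, swX rPTi, swX rPT1i, swX rPT2i, hPB, mulX hPB, hP2, mulX hP2,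
      hB3, tripX hB3]
  · refine ⟨T1, hT1K, 4, ?_⟩
    show (B * P) * T = T1 * (B * P)
    try simp only [mul_assoc, one_mul, mul_one, inv_mul_cancel_left, mul_inv_cancel_left, inv_mul_cancel,
      mul_inv_cancel, rBT, rBT1, rBT2, rBTi, rBT1i, rBT2i, swX rBT, swX rBT1, swX rBT2,
      swX rBTi, swX rBT1i, swX rBT2i, rPT, rPT1, rPT2, rPTi, rPT1i, rPT2i, swX rPT,
      swX rPT1, swX rPT2, swX rPTi, swX rPT1i, swX rPT2i, hPB, mulX hPB, hP2, mulX hP2,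
      hB3, tripX hB3]
  · refine ⟨T2, hT2K, 5, ?_⟩
    show (B * (B * P)) * T = T2 * (B * (B * P))
    try simp only [mul_assoc, one_mul, mul_one, inv_mul_cancel_left, mul_inv_cancel_left, inv_mul_cancel,
      mul_inv_cancel, rBT, rBT1, rBT2, rBTi, rBT1i, rBT2i, swX rBT, swX rBT1, swX rBT2,
      swX rBTi, swX rBT1i, swX rBT2i, rPT, rPT1, rPT2, rPTi, rPT1i, rPT2i, swX rPT,
      swX rPT1, swX rPT2, swX rPTi, swX rPT1i, swX rPT2i, hPB, mulX hPB, hP2, mulX hP2,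
      hB3, tripX hB3]

lemma QTi : Q (T⁻¹) := by
  intro i
  fin_cases i
  · refine ⟨T⁻¹, inv_mem hTK, 0, ?_⟩
    show 1 * T⁻¹ = T⁻¹ * (1:G₁)
    try simp only [mul_assoc, one_mul, mul_one, inv_mul_cancel_left, mul_inv_cancel_left, inv_mul_cancel,
      mul_inv_cancel, rBT, rBT1, rBT2, rBTi, rBT1i, rBT2i, swX rBT, swX rBT1, swX rBT2,
      swX rBTi, swX rBT1i, swX rBT2i, rPT, rPT1, rPT2, rPTi, rPT1i, rPT2i, swX rPT,
      swX rPT1, swX rPT2, swX rPTi, swX rPT1i, swX rPT2i, hPB, mulX hPB, hP2, mulX hP2,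
      hB3, tripX hB3]
  · refine ⟨T1⁻¹, inv_mem hT1K, 1, ?_⟩
    show B * T⁻¹ = T1⁻¹ * B
    try simp only [mul_assoc, one_mul, mul_one, inv_mul_cancel_left, mul_inv_cancel_left, inv_mul_cancel,
      mul_inv_cancel, rBT, rBT1, rBT2, rBTi, rBT1i, rBT2i, swX rBT, swX rBT1, swX rBT2,
      swX rBTi, swX rBT1i, swX rBT2i, rPT, rPT1, rPT2, rPTi, rPT1i, rPT2i, swX rPT,
      swX rPT1, swX rPT2, swX rPTi, swX rPT1i, swX rPT2i, hPB, mulX hPB, hP2, mulX hP2,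
      hB3, tripX hB3]
  · refine ⟨T2⁻¹, inv_mem hT2K, 2, ?_⟩
    show (B * B) * T⁻¹ = T2⁻¹ * (B * B)
    try simp only [mul_assoc, one_mul, mul_one, inv_mul_cancel_left, mul_inv_cancel_left, inv_mul_cancel,
      mul_inv_cancel, rBT, rBT1, rBT2, rBTi, rBT1i, rBT2i, swX rBT, swX rBT1, swX rBT2,
      swX rBTi, swX rBT1i, swX rBT2i, rPT, rPT1, rPT2, rPTi, rPT1i, rPT2i, swX rPT,
      swX rPT1, swX rPT2, swX rPTi, swX rPT1i, swX rPT2i, hPB, mulX hPB, hP2, mulX hP2,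
      hB3, tripX hB3]
  · refine ⟨T⁻¹, inv_mem hTK, 3, ?_⟩
    show P * T⁻¹ = T⁻¹ * P
    try simp only [mul_assoc, one_mul, mul_one, inv_mul_cancel_left, mul_inv_cancel_left, inv_mul_cancel,
      mul_inv_cancel, rBT, rBT1, rBT2, rBTi, rBT1i, rBT2i, swX rBT, swX rBT1, swX rBT2,
      swX rBTi, swX rBT1i, swX rBT2i, rPT, rPT1, rPT2, rPTi, rPT1i, rPT2i, swX rPT,
      swX rPT1, swX rPT2, swX rPTi, swX rPT1i, swX rPT2i, hPB, mulX hPB, hP2, mulX hP2,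
      hB3, tripX hB3]
  · refine ⟨T1⁻¹, inv_mem hT1K, 4, ?_⟩
    show (B * P) * T⁻¹ = T1⁻¹ * (B * P)
    try simp only [mul_assoc, one_mul, mul_one, inv_mul_cancel_left, mul_inv_cancel_left, inv_mul_cancel,
      mul_inv_cancel, rBT, rBT1, rBT2, rBTi, rBT1i, rBT2i, swX rBT, swX rBT1, swX rBT2,
      swX rBTi, swX rBT1i, swX rBT2i, rPT, rPT1, rPT2, rPTi, rPT1i, rPT2i, swX rPT,
      swX rPT1, swX rPT2, swX rPTi, swX rPT1i, swX rPT2i, hPB, mulX hPB, hP2, mulX hP2,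
      hB3, tripX hB3]
  · refine ⟨T2⁻¹, inv_mem hT2K, 5, ?_⟩
    show (B * (B * P)) * T⁻¹ = T2⁻¹ * (B * (B * P))
    try simp only [mul_assoc, one_mul, mul_one, inv_mul_cancel_left, mul_inv_cancel_left, inv_mul_cancel,
      mul_inv_cancel, rBT, rBT1, rBT2, rBTi, rBT1i, rBT2i, swX rBT, swX rBT1, swX rBT2,
      swX rBTi, swX rBT1i, swX rBT2i, rPT, rPT1, rPT2, rPTi, rPT1i, rPT2i, swX rPT,
      swX rPT1, swX rPT2, swX rPTi, swX rPT1i, swX rPT2i, hPB, mulX hPB, hP2, mulX hP2,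
      hB3, tripX hB3]
lemma Qone : Q 1 := fun i => ⟨1, one_mem _, i, by rw [mul_one, one_mul]⟩

lemma Qmul {x y : G₁} (hx : Q x) (hy : Q y) : Q (x * y) := by
  intro i
  obtain ⟨k, hk, m, hm⟩ := hx i
  obtain ⟨k', hk', m', hm'⟩ := hy m
  exact ⟨k * k', mul_mem hk hk', m', by rw [← mul_assoc, hm, mul_assoc, hm', ← mul_assoc]⟩

lemma Qall : ∀ g : G₁, Q g := by
  intro g
  obtain ⟨w, rfl⟩ := PresentedGroup.mk_surjective rels g
  induction w using FreeGroup.induction_on with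
  | C1 => exact (map_one (PresentedGroup.mk rels)) ▸ Qone
  | of x =>
    fin_cases x
    · exact QB
    · exact QP
    · exact QT
  | inv_of x _ =>
    rw [map_inv]
    fin_cases x
    · exact QBi
    · exact QPi
    · exact QTi
  | mul x y hx hy =>
    rw [map_mul]
    exact Qmul hx hy

lemma φψ (u : Multiplicative (Fin 3 → ℤ)) : φ (ψ u) = 1 := by
  rw [ψ_apply, map_mul, map_mul, map_zpow, map_zpow, map_zpow, φT, φT1, φT2]
  simp

lemma φrp_vals : ∀ m : Fin 6,
    φ (rp m) = ![1, cσ, cσ * cσ, sσ, cσ * sσ, cσ * (cσ * sσ)] m := by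
  intro m
  fin_cases m
  · show φ 1 = 1; exact map_one φ
  · show φ B = cσ; exact φB
  · show φ (B * B) = cσ * cσ; rw [map_mul, φB]
  · show φ P = sσ; exact φP
  · show φ (B * P) = cσ * sσ; rw [map_mul, φB, φP]
  · show φ (B * (B * P)) = cσ * (cσ * sσ); rw [map_mul, map_mul, φB, φP]

lemma φrp_one : ∀ m : Fin 6, φ (rp m) = 1 → m = 0 := by
  intro m h
  rw [φrp_vals m] at h
  fin_cases m
  · rfl
  · exact absurd h (by decide)
  · exact absurd h (by decide)
  · exact absurd h (by decide)
  · exact absurd h (by decide)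
  · exact absurd h (by decide)

theorem extension_of_S3 :
    ∃ φ : G₁ →* Equiv.Perm (Fin 3),
      Function.Surjective φ ∧
      φ (img t) = 1 ∧
      (φ (img b)).IsThreeCycle ∧
      (φ (img p)).IsSwap ∧
      ∃ ψ : Multiplicative (Fin 3 → ℤ) →* G₁,
        Function.Injective ψ ∧
        ψ.range = φ.ker ∧
        ψ (Multiplicative.ofAdd (Pi.single 0 1)) = img t ∧
        ψ (Multiplicative.ofAdd (Pi.single 1 1)) = img t1 ∧
        ψ (Multiplicative.ofAdd (Pi.single 2 1)) = img t2 := by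
  refine ⟨φ, ?_, φT, ?_, ?_, ψ, ψ_inj, ?_, ψ_single0, ψ_single1, ψ_single2⟩
  · intro σ
    have h : σ = 1 ∨ σ = cσ ∨ σ = cσ * cσ ∨ σ = sσ ∨ σ = cσ * sσ ∨ σ = cσ * (cσ * sσ) := by
      revert σ; decide
    rcases h with h|h|h|h|h|h <;> subst h
    · exact ⟨1, map_one φ⟩
    · exact ⟨B, φB⟩
    · exact ⟨B * B, by rw [map_mul, φB]⟩
    · exact ⟨P, φP⟩
    · exact ⟨B * P, by rw [map_mul, φB, φP]⟩
    · exact ⟨B * (B * P), by rw [map_mul, map_mul, φB, φP]⟩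
  · show (φ B).IsThreeCycle
    rw [φB]
    exact Equiv.Perm.isThreeCycle_swap_mul_swap_same (by decide) (by decide) (by decide)
  · show (φ P).IsSwap
    rw [φP]
    exact ⟨1, 2, by decide, rfl⟩
  · ext g
    simp only [MonoidHom.mem_range, MonoidHom.mem_ker]
    constructor
    · rintro ⟨u, rfl⟩
      exact φψ u
    · intro hg1
      obtain ⟨k, hk, m, hm⟩ := Qall g 0
      rw [show rp 0 = 1 from rfl, one_mul] at hm
      have hφk : φ k = 1 := by
        obtain ⟨u, rfl⟩ := hk
        exact φψ u
      have hφrp : φ (rp m) = 1 := by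
        have := congrArg φ hm
        rw [hg1, map_mul, hφk, one_mul] at this
        exact this.symm
      have hm0 : m = 0 := φrp_one m hφrp
      subst hm0
      rw [show rp 0 = 1 from rfl, mul_one] at hm
      obtain ⟨u, hu⟩ := hk
      exact ⟨u, by rw [hu, ← hm]⟩


end Stmt5
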